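/- Let 0 < H < 1. There exists a constant τ > 0, depending only on H, such that for all real numbers 0 ≤ r ≤ s one has s^{2H} r^{2H} − R_H(s,r)² ≥ τ (s−r)^{2H} r^{2H}, where R_H(s,r) = (1/2)(s^{2H} + r^{2H} − |s−r|^{2H}) is the covariance of fractional Brownian motion, i.e. R_H(s,r) = E[B^H_s B^H_r]. -/

import Mathlib

open Real

/-- Covariance function of fractional Brownian motion with Hurst parameter `H`. -/
noncomputable def RH (H t s : ℝ) : ℝ :=
  (t ^ (2 * H) + s ^ (2 * H) - |t - s| ^ (2 * H)) / 2

/-- Subadditivity of `x ↦ x ^ p` for `0 ≤ p ≤ 1` (real version). -/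
lemma aux_rpow_subadd {p x y : ℝ} (hx : 0 ≤ x) (hy : 0 ≤ y) (hp : 0 ≤ p) (hp1 : p ≤ 1) :
    (x + y) ^ p ≤ x ^ p + y ^ p := by
  have h := NNReal.rpow_add_le_add_rpow x.toNNReal y.toNNReal hp hp1
  have hc : ((x.toNNReal + y.toNNReal : NNReal) : ℝ) = x + y := by
    simp [Real.coe_toNNReal _ hx, Real.coe_toNNReal _ hy]
  calc (x + y) ^ p = ((x.toNNReal + y.toNNReal : NNReal) : ℝ) ^ p := by rw [hc]
    _ = (((x.toNNReal + y.toNNReal) ^ p : NNReal) : ℝ) := by rw [NNReal.coe_rpow]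
    _ ≤ ((x.toNNReal ^ p + y.toNNReal ^ p : NNReal) : ℝ) := by exact_mod_cast h
    _ = x ^ p + y ^ p := by
        push_cast [NNReal.coe_rpow, Real.coe_toNNReal _ hx, Real.coe_toNNReal _ hy]
        ring

/-- Superadditivity of `x ↦ x ^ p` for `1 ≤ p` (real version). -/
lemma aux_rpow_superadd {p x y : ℝ} (hx : 0 ≤ x) (hy : 0 ≤ y) (hp1 : 1 ≤ p) :
    x ^ p + y ^ p ≤ (x + y) ^ p := by
  have h := NNReal.add_rpow_le_rpow_add x.toNNReal y.toNNReal hp1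
  have hc : ((x.toNNReal + y.toNNReal : NNReal) : ℝ) = x + y := by
    simp [Real.coe_toNNReal _ hx, Real.coe_toNNReal _ hy]
  calc x ^ p + y ^ p = ((x.toNNReal ^ p + y.toNNReal ^ p : NNReal) : ℝ) := by
        push_cast [NNReal.coe_rpow, Real.coe_toNNReal _ hx, Real.coe_toNNReal _ hy]
        ring
    _ ≤ (((x.toNNReal + y.toNNReal) ^ p : NNReal) : ℝ) := by exact_mod_cast h
    _ = (x + y) ^ p := by rw [NNReal.coe_rpow, hc]

/-- Key inequality for `1 ≤ p ≤ 2`: `(x+y)^p ≤ x^p + y^p + p x y^(p-1)`. -/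
lemma aux_key {p x y : ℝ} (hx : 0 ≤ x) (hy : 0 < y) (hp1 : 1 ≤ p) (hp2 : p ≤ 2) :
    (x + y) ^ p ≤ x ^ p + y ^ p + p * x * y ^ (p - 1) := by
  set g : ℝ → ℝ := fun t => t ^ p + p * t * y ^ (p - 1) - (t + y) ^ p with hg
  have hmono : MonotoneOn g (Set.Icc 0 x) := by
    apply monotoneOn_of_hasDerivWithinAt_nonneg (f' := fun t =>
        p * t ^ (p - 1) + p * y ^ (p - 1) - p * (t + y) ^ (p - 1)) (convex_Icc 0 x)
    · apply ContinuousOn.sub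
      · exact ((continuousOn_id.rpow_const (fun t _ => Or.inr (by positivity))).add
          (continuousOn_const.mul continuousOn_id |>.mul continuousOn_const))
      · exact (continuousOn_id.add continuousOn_const).rpow_const
          (fun t _ => Or.inr (by positivity))
    · intro t ht
      rw [interior_Icc] at ht
      have ht0 : 0 < t := ht.1
      have h1 : HasDerivAt (fun t : ℝ => t ^ p) (p * t ^ (p - 1)) t := by
        have := Real.hasDerivAt_rpow_const (x := t) (p := p) (Or.inl (ne_of_gt ht0))
        exact this
      have h2 : HasDerivAt (fun t : ℝ => p * t * y ^ (p - 1)) (p * y ^ (p - 1)) t := by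
        have : HasDerivAt (fun t : ℝ => t) 1 t := hasDerivAt_id t
        have := (this.const_mul p).mul_const (y ^ (p - 1))
        simpa using this
      have h3 : HasDerivAt (fun t : ℝ => (t + y) ^ p) (p * (t + y) ^ (p - 1)) t := by
        have hid : HasDerivAt (fun t : ℝ => t + y) 1 t := (hasDerivAt_id t).add_const y
        have := hid.rpow_const (p := p) (Or.inl (by positivity))
        simpa using this
      exact ((h1.add h2).sub h3).hasDerivWithinAt
    · intro t ht
      rw [interior_Icc] at ht
      have ht0 : 0 < t := ht.1
      have hsub : (t + y) ^ (p - 1) ≤ t ^ (p - 1) + y ^ (p - 1) :=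
        aux_rpow_subadd ht0.le hy.le (by linarith) (by linarith)
      have hp0 : 0 < p := by linarith
      nlinarith [mul_le_mul_of_nonneg_left hsub hp0.le]
  have h0 : g 0 = -(y ^ p) := by
    simp [hg, Real.zero_rpow (by positivity : p ≠ 0)]
  have hx' : g 0 ≤ g x := hmono (Set.left_mem_Icc.2 hx) (Set.mem_Icc.2 ⟨hx, le_refl x⟩) hx
  rw [h0] at hx'
  simp only [hg] at hx'
  linarith

/-- Bound on the "superadditivity defect" squared:
`((x+y)^p - x^p - y^p)^2 ≤ max 1 (p^2) * (x^p * y^p)` for `0 < p < 2`. -/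
lemma aux_defect_sq {p x y : ℝ} (hx : 0 ≤ x) (hy : 0 ≤ y) (hp : 0 < p) (hp2 : p < 2) :
    ((x + y) ^ p - x ^ p - y ^ p) ^ 2 ≤ max 1 (p ^ 2) * (x ^ p * y ^ p) := by
  rcases eq_or_lt_of_le hx with hx0 | hx0
  · simp [← hx0, Real.zero_rpow (ne_of_gt hp)]
  rcases eq_or_lt_of_le hy with hy0 | hy0
  · simp [← hy0, Real.zero_rpow (ne_of_gt hp)]
  have hxp : 0 < x ^ p := Real.rpow_pos_of_pos hx0 p
  have hyp : 0 < y ^ p := Real.rpow_pos_of_pos hy0 p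
  rcases le_or_gt p 1 with hple | hpgt
  · -- subadditive case : |defect| ≤ min(x,y)^p
    have hd1 : (x + y) ^ p ≤ x ^ p + y ^ p := aux_rpow_subadd hx hy hp.le hple
    have hbig : 0 ≤ (x + y) ^ p - x ^ p - y ^ p + min (x ^ p) (y ^ p) := by
      rcases le_total x y with hxy | hxy
      · have : y ^ p ≤ (x + y) ^ p :=
          Real.rpow_le_rpow hy (by linarith) hp.le
        have hmin : min (x ^ p) (y ^ p) = x ^ p :=
          min_eq_left (Real.rpow_le_rpow hx hxy hp.le)
        rw [hmin]; linarith
      · have : x ^ p ≤ (x + y) ^ p :=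
          Real.rpow_le_rpow hx (by linarith) hp.le
        have hmin : min (x ^ p) (y ^ p) = y ^ p :=
          min_eq_right (Real.rpow_le_rpow hy hxy hp.le)
        rw [hmin]; linarith
    have hminsq : min (x ^ p) (y ^ p) ^ 2 ≤ x ^ p * y ^ p := by
      rcases le_total (x ^ p) (y ^ p) with h | h
      · rw [min_eq_left h]; nlinarith
      · rw [min_eq_right h]; nlinarith
    have h1 : (1 : ℝ) ≤ max 1 (p ^ 2) := le_max_left _ _
    have hmin0 : 0 ≤ min (x ^ p) (y ^ p) := le_min hxp.le hyp.le
    nlinarith [sq_nonneg ((x + y) ^ p - x ^ p - y ^ p + min (x ^ p) (y ^ p)),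
      sq_nonneg ((x + y) ^ p - x ^ p - y ^ p)]
  · -- superadditive case : 0 ≤ defect ≤ p x y^{p-1}, and symmetric bound
    have hd0 : 0 ≤ (x + y) ^ p - x ^ p - y ^ p := by
      have := aux_rpow_superadd hx hy hpgt.le
      linarith
    have hb1 : (x + y) ^ p - x ^ p - y ^ p ≤ p * x * y ^ (p - 1) := by
      have := aux_key hx hy0 hpgt.le hp2.le
      linarith
    have hb2 : (x + y) ^ p - x ^ p - y ^ p ≤ p * y * x ^ (p - 1) := by
      have := aux_key hy hx0 hpgt.le hp2.le
      have hcomm : (y + x) ^ p = (x + y) ^ p := by rw [add_comm]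
      linarith [hcomm ▸ this]
    have hxy1 : x * x ^ (p - 1) = x ^ p := by
      rw [← Real.rpow_one_add' hx0.le (by intro h; nlinarith)]
      ring_nf
    have hyy1 : y * y ^ (p - 1) = y ^ p := by
      rw [← Real.rpow_one_add' hy0.le (by intro h; nlinarith)]
      ring_nf
    have hprod : (p * x * y ^ (p - 1)) * (p * y * x ^ (p - 1)) = p ^ 2 * (x ^ p * y ^ p) := by
      have : (p * x * y ^ (p - 1)) * (p * y * x ^ (p - 1))
          = p ^ 2 * ((x * x ^ (p - 1)) * (y * y ^ (p - 1))) := by ring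
      rw [this, hxy1, hyy1]
    have hsq : ((x + y) ^ p - x ^ p - y ^ p) ^ 2 ≤ p ^ 2 * (x ^ p * y ^ p) := by
      calc ((x + y) ^ p - x ^ p - y ^ p) ^ 2
          ≤ (p * x * y ^ (p - 1)) * (p * y * x ^ (p - 1)) := by nlinarith
        _ = p ^ 2 * (x ^ p * y ^ p) := hprod
    calc ((x + y) ^ p - x ^ p - y ^ p) ^ 2 ≤ p ^ 2 * (x ^ p * y ^ p) := hsq
      _ ≤ max 1 (p ^ 2) * (x ^ p * y ^ p) := by
          apply mul_le_mul_of_nonneg_right (le_max_right _ _) (by positivity)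

theorem statement1 (H : ℝ) (hH : 0 < H) (hH' : H < 1) :
    ∃ τ : ℝ, 0 < τ ∧ ∀ r s : ℝ, 0 ≤ r → r ≤ s →
      τ * ((s - r) ^ (2 * H) * r ^ (2 * H)) ≤
        s ^ (2 * H) * r ^ (2 * H) - (RH H s r) ^ 2 := by
  set p : ℝ := 2 * H with hp
  have hp0 : 0 < p := by positivity
  have hp2 : p < 2 := by simp only [hp]; linarith
  refine ⟨1 - max 1 (p ^ 2) / 4, ?_, ?_⟩
  · have : max 1 (p ^ 2) < 4 := by
      apply max_lt (by norm_num)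
      nlinarith
    linarith
  · intro r s hr hrs
    set x : ℝ := r
    set y : ℝ := s - r with hy
    have hy0 : 0 ≤ y := by linarith
    have hsx : s = x + y := by simp [hy, x]
    have habs : |s - r| = y := abs_of_nonneg hy0
    have hd := aux_defect_sq hr hy0 hp0 hp2
    have hxp : 0 ≤ x ^ p := Real.rpow_nonneg hr p
    have hyp : 0 ≤ y ^ p := Real.rpow_nonneg hy0 p
    -- the algebraic identity
    rw [RH, habs, hsx]
    set A := x ^ p with hA
    set C := y ^ p with hC
    set B := (x + y) ^ p with hB
    -- goal : τ * (C * A) ≤ B * A - ((B + A - C)/2)^2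
    -- identity: B*A - ((B+A-C)/2)^2 = A*C - (B - A - C)^2/4
    have hid : B * A - ((B + A - C) / 2) ^ 2 = A * C - (B - A - C) ^ 2 / 4 := by ring
    rw [hid]
    have hmax : (1 : ℝ) ≤ max 1 (p ^ 2) := le_max_left _ _
    nlinarith [hd, mul_nonneg hxp hyp]
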